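/- arXiv:2404.13804 — 2 statements merged into one kernel-verified Lean document; each statement's English description precedes it below -/
import Mathlib

section
/- Let N ≥ 2, a_1,...,a_N > 0, c_1,...,c_N ≥ 0, β ≥ 0, K > 0, and define f(q) = (sum_i q_i a_i)(sum_i c_i/(K q_i) + β) on the open simplex {q : q_i > 0, sum q_i = 1}. Fix indices i ≠ j with a_i ≤ a_j and c_i ≥ c_j. For any q in the simplex with q_i < q_j, the vector q' obtained from q by swapping q_i and q_j satisfies f(q') ≤ f(q). -/
/-- Swap inequality: if client `i` is faster (`a i ≤ a j`) and statistically more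
important (`c i ≥ c j`) than client `j`, and `q i < q j`, then swapping the two
sampling probabilities does not increase the objective. -/
theorem swap_inequality_optimal_sampling
    {N : ℕ} (hN : 2 ≤ N)
    (a c : Fin N → ℝ) (β K : ℝ)
    (ha : ∀ k, 0 < a k) (hc : ∀ k, 0 ≤ c k) (hβ : 0 ≤ β) (hK : 0 < K)
    (i j : Fin N) (hij : i ≠ j) (haij : a i ≤ a j) (hcij : c j ≤ c i)
    (q : Fin N → ℝ) (hq : ∀ k, 0 < q k) (hq1 : ∑ k, q k = 1)
    (hqij : q i < q j) :
    (∑ k, (q ∘ Equiv.swap i j) k * a k) *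
        ((∑ k, c k / (K * (q ∘ Equiv.swap i j) k)) + β) ≤
      (∑ k, q k * a k) * ((∑ k, c k / (K * q k)) + β) := by
  set σ := Equiv.swap i j with hσ
  have hσi : σ i = j := Equiv.swap_apply_left i j
  have hσj : σ j = i := Equiv.swap_apply_right i j
  have hσσ : ∀ k, σ (σ k) = k := fun k => Equiv.swap_apply_self i j k
  have hS' : ∑ k, (q ∘ σ) k * a k = ∑ k, q k * a (σ k) := by
    rw [← Equiv.sum_comp σ (fun k => q k * a (σ k))]
    simp only [Function.comp, hσσ]
  have hT' : ∑ k, c k / (K * (q ∘ σ) k) = ∑ k, c (σ k) / (K * q k) := by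
    rw [← Equiv.sum_comp σ (fun k => c (σ k) / (K * q k))]
    simp only [Function.comp, hσσ]
  -- sums restricted to the pair {i, j}
  have pairred : ∀ f : Fin N → ℝ, (∀ k, k ≠ i → k ≠ j → f k = 0) →
      ∑ k, f k = f i + f j := by
    intro f hf
    rw [show (∑ k, f k) = ∑ k ∈ ({i, j} : Finset (Fin N)), f k from
      (Finset.sum_subset (Finset.subset_univ _) (by
        intro x _ hx
        simp only [Finset.mem_insert, Finset.mem_singleton, not_or] at hx
        exact hf x hx.1 hx.2)).symm]
    exact Finset.sum_pair hij
  have hSle : ∑ k, q k * a (σ k) ≤ ∑ k, q k * a k := by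
    have h1 : ∑ k, (q k * a (σ k) - q k * a k) = (q i * a j - q i * a i) + (q j * a i - q j * a j) := by
      rw [pairred _ (fun k hki hkj => by rw [Equiv.swap_apply_of_ne_of_ne hki hkj]; ring)]
      rw [hσi, hσj]
    rw [Finset.sum_sub_distrib] at h1
    nlinarith [hq i, hq j]
  have hTle : ∑ k, c (σ k) / (K * q k) ≤ ∑ k, c k / (K * q k) := by
    have h1 : ∑ k, (c (σ k) / (K * q k) - c k / (K * q k)) =
        (c j / (K * q i) - c i / (K * q i)) + (c i / (K * q j) - c j / (K * q j)) := by
      rw [pairred _ (fun k hki hkj => by rw [Equiv.swap_apply_of_ne_of_ne hki hkj]; ring)]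
      rw [hσi, hσj]
    rw [Finset.sum_sub_distrib] at h1
    have hxi : (0:ℝ) < K * q i := mul_pos hK (hq i)
    have hxj : (0:ℝ) < K * q j := mul_pos hK (hq j)
    have hdiff : (c j / (K * q i) - c i / (K * q i)) + (c i / (K * q j) - c j / (K * q j)) ≤ 0 := by
      rw [div_sub_div_same, div_sub_div_same, div_add_div _ _ hxi.ne' hxj.ne']
      apply div_nonpos_of_nonpos_of_nonneg
      · nlinarith [mul_nonneg hK.le (mul_nonneg (sub_nonneg.2 hcij) (sub_nonneg.2 hqij.le))]
      · positivity
    linarith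
  have hS'nonneg : 0 ≤ ∑ k, q k * a (σ k) :=
    Finset.sum_nonneg fun k _ => mul_nonneg (hq k).le (ha (σ k)).le
  have hT'β : 0 ≤ (∑ k, c (σ k) / (K * q k)) + β := by
    have : 0 ≤ ∑ k, c (σ k) / (K * q k) :=
      Finset.sum_nonneg fun k _ => div_nonneg (hc _) (mul_pos hK (hq k)).le
    linarith
  rw [hS', hT']
  exact mul_le_mul hSle (by linarith) hT'β
    (Finset.sum_nonneg fun k _ => mul_nonneg (hq k).le (ha k).le)
end

section
/- Fix constants α > 0, β ≥ 0, K > 0, a_1, a_2 > 0 with a_1 ≠ a_2, and c_1, c_2 > 0. Define F(q_1, q_2) = (q_1 a_1 + q_2 a_2)(α(c_1/(K q_1) + c_2/(K q_2)) + β) for q_1, q_2 > 0. Then F is not convex on the positive quadrant; in particular the determinant of its Hessian at some point is negative (the Hessian determinant equals -α^2 (a_1 c_2/q_2^2 - a_2 c_1/q_1^2)^2 / K^2 ≤ 0, and is strictly negative whenever a_1 c_2/q_2^2 ≠ a_2 c_1/q_1^2). -/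
/-- Non-convexity of the two-client objective
`F (q1, q2) = (q1 a1 + q2 a2) (α (c1/(K q1) + c2/(K q2)) + β)` on the positive
quadrant; in particular the Hessian determinant
`-α² (a1 c2/q2² - a2 c1/q1²)² / K²` is negative at some point. -/
theorem two_client_objective_not_convex
    (α β K a1 a2 c1 c2 : ℝ)
    (hα : 0 < α) (hβ : 0 ≤ β) (hK : 0 < K)
    (ha1 : 0 < a1) (ha2 : 0 < a2) (ha : a1 ≠ a2)
    (hc1 : 0 < c1) (hc2 : 0 < c2) :
    ¬ ConvexOn ℝ {p : ℝ × ℝ | 0 < p.1 ∧ 0 < p.2}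
        (fun p : ℝ × ℝ =>
          (p.1 * a1 + p.2 * a2) *
            (α * (c1 / (K * p.1) + c2 / (K * p.2)) + β)) ∧
    ∃ q1 q2 : ℝ, 0 < q1 ∧ 0 < q2 ∧
      -α ^ 2 * (a1 * c2 / q2 ^ 2 - a2 * c1 / q1 ^ 2) ^ 2 / K ^ 2 < 0 := by
  constructor
  · intro h
    set s : ℝ := Real.sqrt (2 * a2 * c1 / (a1 * c2)) with hs_def
    have hpos : 0 < 2 * a2 * c1 / (a1 * c2) := by positivity
    have hs : 0 < s := Real.sqrt_pos.mpr hpos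
    have hs2 : s ^ 2 = 2 * a2 * c1 / (a1 * c2) := Real.sq_sqrt hpos.le
    have hs2' : s ^ 2 * (a1 * c2) = 2 * a2 * c1 := by
      rw [hs2]; field_simp
    have hX : ((s / 2, (1:ℝ)/2) : ℝ × ℝ) ∈ {p : ℝ × ℝ | 0 < p.1 ∧ 0 < p.2} := by
      constructor <;> simp <;> positivity
    have hY : (((2:ℝ) * s, (1:ℝ)) : ℝ × ℝ) ∈ {p : ℝ × ℝ | 0 < p.1 ∧ 0 < p.2} := by
      constructor <;> simp <;> positivity
    have key := h.2 hX hY (by norm_num : (0:ℝ) ≤ 1/2) (by norm_num : (0:ℝ) ≤ 1/2)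
      (by norm_num : (1:ℝ)/2 + 1/2 = 1)
    simp only [Prod.smul_mk, smul_eq_mul, Prod.mk_add_mk] at key
    have hm1 : (1:ℝ)/2 * (s/2) + 1/2 * (2*s) = 5*s/4 := by ring
    have hm2 : (1:ℝ)/2 * (1/2) + 1/2 * 1 = 3/4 := by ring
    rw [hm1, hm2] at key
    have hK' : K ≠ 0 := hK.ne'
    have hs' : s ≠ 0 := hs.ne'
    have contra :
        (1:ℝ)/2 * ((s/2 * a1 + 1/2 * a2) * (α * (c1 / (K * (s/2)) + c2 / (K * (1/2))) + β))
          + 1/2 * ((2*s * a1 + 1 * a2) * (α * (c1 / (K * (2*s)) + c2 / (K * 1)) + β))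
        < (5*s/4 * a1 + 3/4 * a2) * (α * (c1 / (K * (5*s/4)) + c2 / (K * (3/4))) + β) := by
      have hKs : (0:ℝ) < K * s := mul_pos hK hs
      rw [div_add_div _ _ (by positivity : K * (s/2) ≠ 0) (by positivity : K * ((1:ℝ)/2) ≠ 0),
        div_add_div _ _ (by positivity : K * (2*s) ≠ 0) (by positivity : K * (1:ℝ) ≠ 0),
        div_add_div _ _ (by positivity : K * (5*s/4) ≠ 0) (by positivity : K * ((3:ℝ)/4) ≠ 0)]
      have e1 : (c1 * (K * (1/2)) + K * (s/2) * c2) / (K * (s/2) * (K * (1/2)))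
          = (2 * c1 + 2 * s * c2) / (K * s) := by
        rw [div_eq_div_iff (by positivity) (by positivity)]; ring
      have e2 : (c1 * (K * 1) + K * (2*s) * c2) / (K * (2*s) * (K * 1))
          = (c1 + 2 * s * c2) / (2 * (K * s)) := by
        rw [div_eq_div_iff (by positivity) (by positivity)]; ring
      have e3 : (c1 * (K * (3/4)) + K * (5*s/4) * c2) / (K * (5*s/4) * (K * (3/4)))
          = (12 * c1 + 20 * s * c2) / (15 * (K * s)) := by
        rw [div_eq_div_iff (by positivity) (by positivity)]; ring
      rw [e1, e2, e3, div_eq_mul_inv _ (K*s), div_eq_mul_inv _ (2*(K*s)),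
        div_eq_mul_inv _ (15*(K*s))]
      have hinv : (0:ℝ) < (K * s)⁻¹ := by positivity
      have hinv2 : (2*(K*s))⁻¹ = (K*s)⁻¹ / 2 := by field_simp
      have hinv3 : (15*(K*s))⁻¹ = (K*s)⁻¹ / 15 := by field_simp
      rw [hinv2, hinv3]
      set u : ℝ := (K * s)⁻¹ with hu
      have hsub : s ^ 2 * (a1 * c2) * (α * u) = 2 * a2 * c1 * (α * u) := by
        rw [hs2']
      nlinarith [hsub, mul_pos (mul_pos hα hinv) (mul_pos ha2 hc1)]
    exact absurd key (not_le.mpr contra)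
  · by_cases h : a1 * c2 = a2 * c1
    · refine ⟨1, 2, one_pos, two_pos, ?_⟩
      have hd : a1 * c2 / (2:ℝ) ^ 2 - a2 * c1 / 1 ^ 2 ≠ 0 := by
        rw [h]
        have : (0:ℝ) < a2 * c1 := mul_pos ha2 hc1
        intro hc; nlinarith
      have h2 : (0:ℝ) < (a1 * c2 / (2:ℝ) ^ 2 - a2 * c1 / 1 ^ 2) ^ 2 :=
        lt_of_le_of_ne (sq_nonneg _) (Ne.symm (pow_ne_zero _ hd))
      apply div_neg_of_neg_of_pos
      · nlinarith [sq_nonneg α, mul_pos (mul_pos hα hα) h2]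
      · positivity
    · refine ⟨1, 1, one_pos, one_pos, ?_⟩
      have hd : a1 * c2 / (1:ℝ) ^ 2 - a2 * c1 / 1 ^ 2 ≠ 0 := by
        simp only [one_pow, div_one]
        exact sub_ne_zero_of_ne h
      have h2 : (0:ℝ) < (a1 * c2 / (1:ℝ) ^ 2 - a2 * c1 / 1 ^ 2) ^ 2 :=
        lt_of_le_of_ne (sq_nonneg _) (Ne.symm (pow_ne_zero _ hd))
      apply div_neg_of_neg_of_pos
      · nlinarith [mul_pos (mul_pos hα hα) h2]
      · positivity
end
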